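/- Let G be a non-trivial group, let 𝒞 be a joinable compression family for G, and let H be a normal subgroup of G that is semi-transitive on 𝒞. Then for every A ∈ 𝒞 there exists B ∈ 𝒞 such that A ≤ B and D(A) ≤ D(B ∩ H). Consequently, for every A ∈ 𝒞 the subgroup A ∩ H is non-abelian. -/

import Mathlib

namespace Paper

variable {G : Type*} [Group G]

/-- Conjugate of a subgroup: `g A g⁻¹`. -/
def conjS (g : G) (A : Subgroup G) : Subgroup G := A.map (MulAut.conj g).toMonoidHom

/-- The family is invariant under conjugation in `G`. -/
def ConjInvariant (C : Set (Subgroup G)) : Prop := ∀ (g : G), ∀ A ∈ C, conjS g A ∈ C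

/-- Condition (A): every member of the family is non-abelian. -/
def CondA (C : Set (Subgroup G)) : Prop :=
  ∀ A ∈ C, ∃ a ∈ A, ∃ b ∈ A, a * b ≠ b * a

/-- Condition (B): for every nontrivial element `g` of `H` there is a member `A` of the
family with `[A, gAg⁻¹] = 1`. -/
def CondB (C : Set (Subgroup G)) (H : Subgroup G) : Prop :=
  ∀ g ∈ H, g ≠ 1 → ∃ A ∈ C, ⁅A, conjS g A⁆ = (⊥ : Subgroup G)

/-- Condition (C): `H` is semi-transitive on the family. -/
def CondC (C : Set (Subgroup G)) (H : Subgroup G) : Prop :=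
  ∀ A ∈ C, ∀ B ∈ C, ∃ g ∈ H, conjS g A ≤ B

/-- Condition (D): the family is joinable. -/
def CondD (C : Set (Subgroup G)) : Prop :=
  ∀ A ∈ C, ∀ B ∈ C, ∀ C' ∈ C, ⁅A, C'⁆ = (⊥ : Subgroup G) → ¬ C' ≤ B →
    ∃ D ∈ C, A ⊔ B ≤ D

/-- Condition (E): the family is shiftable over `H`: for each `A` in the family there is
`g ∈ H` and a homomorphism from the unrestricted direct product `∏_{i ≥ 1} A` into `H`
restricting to the identity on the first factor, which `g` conjugates by the shift. -/
def CondE (C : Set (Subgroup G)) (H : Subgroup G) : Prop :=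
  ∀ A ∈ C, ∃ g ∈ H, ∃ φ : (ℕ → A) →* G,
    (∀ f : ℕ → A, φ f ∈ H) ∧
    (∀ a : A, φ (fun i => if i = 0 then a else 1) = (a : G)) ∧
    (∀ f : ℕ → A, g * φ f * g⁻¹ = φ (fun i => match i with | 0 => 1 | (n+1) => f n))

/-- Conditions (A)–(C): a compression family for `H`. -/
def IsCompressionFamily (C : Set (Subgroup G)) (H : Subgroup G) : Prop :=
  ConjInvariant C ∧ CondA C ∧ CondB C H ∧ CondC C H

/-- Conditions (A)–(D): a joinable compression family for `H`. -/
def IsJoinableCompressionFamily (C : Set (Subgroup G)) (H : Subgroup G) : Prop :=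
  IsCompressionFamily C H ∧ CondD C

/-- Conditions (A)–(E): a shift-joinable compression family for `H`. -/
def IsShiftJoinableCompressionFamily (C : Set (Subgroup G)) (H : Subgroup G) : Prop :=
  IsJoinableCompressionFamily C H ∧ CondE C H

lemma mem_conjS {g x : G} {A : Subgroup G} : x ∈ conjS g A ↔ g⁻¹ * x * g ∈ A := by
  constructor
  · rintro ⟨a, ha, rfl⟩
    simpa [MulAut.conj_apply, mul_assoc] using ha
  · intro h
    exact ⟨g⁻¹ * x * g, h, by simp [MulAut.conj_apply]; group⟩

lemma conjS_mono (g : G) {A B : Subgroup G} (h : A ≤ B) : conjS g A ≤ conjS g B := by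
  intro x hx
  rw [mem_conjS] at hx ⊢
  exact h hx

lemma conjS_conjS (g h : G) (A : Subgroup G) : conjS g (conjS h A) = conjS (g * h) A := by
  ext x
  simp only [mem_conjS, mul_inv_rev, mul_assoc]

lemma conjS_one (A : Subgroup G) : conjS (1 : G) A = A := by
  ext x; simp [mem_conjS]

lemma conjS_le_cancel {u : G} {X Y : Subgroup G} (h : conjS u X ≤ conjS u Y) : X ≤ Y := by
  have := conjS_mono u⁻¹ h
  rwa [conjS_conjS, conjS_conjS, inv_mul_cancel, conjS_one, conjS_one] at this

lemma conjS_inj {u : G} {X Y : Subgroup G} (h : conjS u X = conjS u Y) : X = Y :=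
  le_antisymm (conjS_le_cancel h.le) (conjS_le_cancel h.ge)

lemma le_conjS_inv {u : G} {X Y : Subgroup G} (h : conjS u X ≤ Y) : X ≤ conjS u⁻¹ Y := by
  have := conjS_mono u⁻¹ h
  rwa [conjS_conjS, inv_mul_cancel, conjS_one] at this

lemma conjS_bot (g : G) : conjS g (⊥ : Subgroup G) = ⊥ := by
  ext x
  simp only [mem_conjS, Subgroup.mem_bot]
  constructor
  · intro h
    have : g * (g⁻¹ * x * g) * g⁻¹ = g * 1 * g⁻¹ := by rw [h]
    simpa [mul_assoc] using this
  · rintro rfl; simp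

lemma conjS_commutator (g : G) (A B : Subgroup G) :
    ⁅conjS g A, conjS g B⁆ = conjS g ⁅A, B⁆ :=
  (Subgroup.map_commutator A B _).symm

lemma comm_of_bot {A B : Subgroup G} (h : ⁅A, B⁆ = (⊥ : Subgroup G)) {x y : G}
    (hx : x ∈ A) (hy : y ∈ B) : x * y = y * x :=
  (commutatorElement_eq_one_iff_commute.mp
    (Subgroup.mem_bot.mp (h ▸ Subgroup.commutator_mem_commutator hx hy))).eq

lemma conjS_self_of_mem {x : G} {P : Subgroup G} (hx : x ∈ P) : conjS x P = P := by
  ext y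
  rw [mem_conjS]
  constructor
  · intro h
    have h2 := P.mul_mem (P.mul_mem hx h) (P.inv_mem hx)
    have e : x * (x⁻¹ * y * x) * x⁻¹ = y := by group
    rwa [e] at h2
  · intro h
    exact P.mul_mem (P.mul_mem (P.inv_mem hx) h) hx

open scoped commutatorElement

lemma key_identity {a b α γ : G} (c1 : α * b = b * α) (c2 : α * γ = γ * α)
    (c3 : γ * a⁻¹ = a⁻¹ * γ) : ⁅a * α, b * γ⁆ = ⁅a, b⁆ := by
  have h1 : α * (b * γ) = (b * γ) * α := by
    calc α * (b * γ) = (α * b) * γ := by rw [mul_assoc]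
      _ = (b * α) * γ := by rw [c1]
      _ = b * (α * γ) := by rw [mul_assoc]
      _ = b * (γ * α) := by rw [c2]
      _ = (b * γ) * α := by rw [mul_assoc]
  have e : α * (b * γ) * α⁻¹ = b * γ := by rw [h1]; group
  have h2 : (a * α) * (b * γ) * (a * α)⁻¹ = a * (b * γ) * a⁻¹ := by
    calc (a * α) * (b * γ) * (a * α)⁻¹ = a * (α * (b * γ) * α⁻¹) * a⁻¹ := by group
      _ = a * (b * γ) * a⁻¹ := by rw [e]
  have h3 : a * (b * γ) * a⁻¹ = a * b * a⁻¹ * γ := by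
    calc a * (b * γ) * a⁻¹ = a * b * (γ * a⁻¹) := by group
      _ = a * b * (a⁻¹ * γ) := by rw [c3]
      _ = a * b * a⁻¹ * γ := by rw [← mul_assoc]
  calc ⁅a * α, b * γ⁆ = (a * α) * (b * γ) * (a * α)⁻¹ * (b * γ)⁻¹ := commutatorElement_def _ _
    _ = (a * b * a⁻¹ * γ) * (b * γ)⁻¹ := by rw [h2, h3]
    _ = a * b * a⁻¹ * b⁻¹ := by group
    _ = ⁅a, b⁆ := (commutatorElement_def a b).symm

/-- Lemma (leafless, part (iv)): if 𝒞 is a joinable compression family for `G` and `H` is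
a normal subgroup of `G` that is semi-transitive on 𝒞, then every `A ∈ 𝒞` is contained in
some `B ∈ 𝒞` with `D(A) ≤ D(B ∩ H)`; consequently `A ∩ H` is non-abelian for every
`A ∈ 𝒞`. -/
theorem derived_le_derived_inf [Nontrivial G] (C : Set (Subgroup G))
    (hC : IsJoinableCompressionFamily C (⊤ : Subgroup G))
    (H : Subgroup G) (hN : H.Normal) (hsemi : CondC C H) :
    (∀ A ∈ C, ∃ B ∈ C, A ≤ B ∧ (⁅A, A⁆ : Subgroup G) ≤ ⁅B ⊓ H, B ⊓ H⁆) ∧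
      ∀ A ∈ C, ∃ a ∈ A ⊓ H, ∃ b ∈ A ⊓ H, a * b ≠ b * a := by
  obtain ⟨⟨hinv, hcA, hcB, hcC⟩, hcD⟩ := hC
  -- base commuting pair (P, Q)
  obtain ⟨g₀, hg₀⟩ := exists_ne (1 : G)
  obtain ⟨P, hP, hPQ⟩ := hcB g₀ trivial hg₀
  set Q := conjS g₀ P with hQdef
  have hQ : Q ∈ C := hinv g₀ P hP
  have habel : ∀ X ∈ C, ⁅X, X⁆ ≠ (⊥ : Subgroup G) := by
    intro X hX hbot
    obtain ⟨a, ha, b, hb, hab⟩ := hcA X hX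
    exact hab (comm_of_bot hbot ha hb)
  -- Step 1: a joined commuting pair exists
  have step1 : ∃ T ∈ C, ∃ T' ∈ C, ∃ D ∈ C,
      ⁅T, T'⁆ = (⊥ : Subgroup G) ∧ T ≤ D ∧ T' ≤ D := by
    by_contra hcon
    push_neg at hcon
    have rule : ∀ X ∈ C, ∀ Y ∈ C, ∀ C' ∈ C, ⁅X, Y⁆ = (⊥ : Subgroup G) →
        ⁅X, C'⁆ = (⊥ : Subgroup G) → C' ≤ Y := by
      intro X hX Y hY C' hC' hXY hXC'
      by_contra hnle
      obtain ⟨D, hDmem, hle⟩ := hcD X hX Y hY C' hC' hXC' hnle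
      exact hcon X hX Y hY D hDmem hXY (le_trans le_sup_left hle) (le_trans le_sup_right hle)
    have uniq : ∀ X ∈ C, ∀ Y ∈ C, ∀ Z ∈ C, ⁅X, Y⁆ = (⊥ : Subgroup G) →
        ⁅X, Z⁆ = (⊥ : Subgroup G) → Y = Z := fun X hX Y hY Z hZ h1 h2 =>
      le_antisymm (rule X hX Z hZ Y hY h2 h1) (rule X hX Y hY Z hZ h1 h2)
    have minQ : ∀ W ∈ C, W ≤ Q → W = Q := by
      intro W hW hle
      have hPW : ⁅P, W⁆ = (⊥ : Subgroup G) :=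
        le_bot_iff.mp ((Subgroup.commutator_mono le_rfl hle).trans hPQ.le)
      exact uniq P hP W hW Q hQ hPW hPQ
    have minAll : ∀ Y ∈ C, ∀ W ∈ C, W ≤ Y → W = Y := by
      intro Y hY W hW hle
      obtain ⟨u, -, hu⟩ := hcC Y hY Q hQ
      have e2 : conjS u Y = Q := minQ _ (hinv u Y hY) hu
      have e1 : conjS u W = Q := minQ _ (hinv u W hW) (le_trans (conjS_mono u hle) hu)
      exact conjS_inj (e1.trans e2.symm)
    have small : ∀ B₀ ∈ C, B₀ = P ∨ B₀ = Q := by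
      intro B₀ hB₀
      by_cases hqb : Q ≤ B₀
      · exact Or.inr (minAll B₀ hB₀ Q hQ hqb).symm
      · obtain ⟨D, hDmem, hle⟩ := hcD P hP B₀ hB₀ Q hQ hPQ hqb
        have e : P = D := minAll D hDmem P hP (le_trans le_sup_left hle)
        have hBP : B₀ ≤ P := by rw [e]; exact le_trans le_sup_right hle
        exact Or.inl (minAll P hP B₀ hB₀ hBP)
    obtain ⟨p₁, hp₁, p₂, hp₂, hpc⟩ := hcA P hP
    have hp₁ne : p₁ ≠ 1 := by rintro rfl; exact hpc (by simp)
    obtain ⟨A₀, hA₀, hA₀c⟩ := hcB p₁ trivial hp₁ne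
    have hconjmem := hinv p₁ A₀ hA₀
    have hne : conjS p₁ A₀ ≠ A₀ := by
      intro he; rw [he] at hA₀c; exact habel A₀ hA₀ hA₀c
    rcases small A₀ hA₀ with rfl | rfl
    · exact hne (conjS_self_of_mem hp₁)
    · rcases small _ hconjmem with hP' | hQ'
      · -- conjS p₁ Q = P with p₁ ∈ P, so Q = P
        have e1 : Q = conjS p₁⁻¹ P := by
          rw [← hP', conjS_conjS, inv_mul_cancel, conjS_one]
        have e2 : Q = P := by rw [e1, conjS_self_of_mem (P.inv_mem hp₁)]
        exact hne (hP'.trans e2.symm)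
      · exact hne hQ'
  obtain ⟨T, hT, T', hT', D, hDmem, hTT', hTD, hT'D⟩ := step1
  -- Step 2: triangle inside a member
  have step2 : ∃ B₂ ∈ C, ∃ M₁ ∈ C, ∃ M₂ ∈ C, ∃ M₃ ∈ C,
      M₁ ≤ B₂ ∧ M₂ ≤ B₂ ∧ M₃ ≤ B₂ ∧ ⁅M₁, M₂⁆ = (⊥ : Subgroup G) ∧
      ⁅M₁, M₃⁆ = (⊥ : Subgroup G) ∧ ⁅M₂, M₃⁆ = (⊥ : Subgroup G) := by
    by_cases hst : ∀ P' ∈ C, ∀ Q' ∈ C, ∀ u : G, ⁅P', Q'⁆ = (⊥ : Subgroup G) →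
        conjS u D ≤ P' → conjS u D = P'
    · exfalso
      obtain ⟨u, -, hu⟩ := hcC D hDmem P hP
      have minP : ∀ W ∈ C, W ≤ P → W = P := by
        intro W hW hle
        obtain ⟨w, -, hw⟩ := hcC D hDmem W hW
        have e := hst P hP Q hQ w hPQ (le_trans hw hle)
        exact le_antisymm hle (by rw [← e]; exact hw)
      have eD : conjS u D = P := hst P hP Q hQ u hPQ hu
      have eT : conjS u T = P := minP _ (hinv u T hT) (le_trans (conjS_mono u hTD) eD.le)
      have hle2 : conjS u T' ≤ conjS u T := by
        rw [eT]; exact le_trans (conjS_mono u hT'D) eD.le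
      have hTsub : T' ≤ T := conjS_le_cancel hle2
      obtain ⟨a, ha, b, hb, hab⟩ := hcA T' hT'
      exact hab (comm_of_bot hTT' (hTsub ha) hb)
    · push_neg at hst
      obtain ⟨P', hP', Q', hQ', u, hpq', hle, hne⟩ := hst
      have hDle : D ≤ conjS u⁻¹ P' := le_conjS_inv hle
      have hcomm : ⁅conjS u⁻¹ Q', conjS u⁻¹ P'⁆ = (⊥ : Subgroup G) := by
        rw [conjS_commutator, Subgroup.commutator_comm, hpq', conjS_bot]
      have hnle : ¬ conjS u⁻¹ P' ≤ D := by
        intro hcon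
        apply hne
        have e : conjS u⁻¹ P' = D := le_antisymm hcon hDle
        rw [← e, conjS_conjS, mul_inv_cancel, conjS_one]
      obtain ⟨B₂, hB₂, hle₂⟩ := hcD (conjS u⁻¹ Q') (hinv _ _ hQ') D hDmem
        (conjS u⁻¹ P') (hinv _ _ hP') hcomm hnle
      have hZT : ⁅T, conjS u⁻¹ Q'⁆ = (⊥ : Subgroup G) := by
        apply le_bot_iff.mp
        calc ⁅T, conjS u⁻¹ Q'⁆ ≤ ⁅conjS u⁻¹ P', conjS u⁻¹ Q'⁆ :=
              Subgroup.commutator_mono (le_trans hTD hDle) le_rfl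
          _ = ⁅conjS u⁻¹ Q', conjS u⁻¹ P'⁆ := Subgroup.commutator_comm _ _
          _ = ⊥ := hcomm
      have hZT' : ⁅T', conjS u⁻¹ Q'⁆ = (⊥ : Subgroup G) := by
        apply le_bot_iff.mp
        calc ⁅T', conjS u⁻¹ Q'⁆ ≤ ⁅conjS u⁻¹ P', conjS u⁻¹ Q'⁆ :=
              Subgroup.commutator_mono (le_trans hT'D hDle) le_rfl
          _ = ⁅conjS u⁻¹ Q', conjS u⁻¹ P'⁆ := Subgroup.commutator_comm _ _
          _ = ⊥ := hcomm
      exact ⟨B₂, hB₂, T, hT, T', hT', conjS u⁻¹ Q', hinv _ _ hQ',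
        le_trans hTD (le_trans le_sup_right hle₂),
        le_trans hT'D (le_trans le_sup_right hle₂),
        le_trans le_sup_left hle₂, hTT', hZT, hZT'⟩
  obtain ⟨B₂, hB₂, M₁, hM₁, M₂, hM₂, M₃, hM₃, h1B, h2B, h3B, h12, h13, h23⟩ := step2
  -- configuration for each A ∈ C
  have config : ∀ A ∈ C, ∃ B ∈ C, A ≤ B ∧ ∃ t ∈ H, ∃ s ∈ H,
      conjS t A ≤ B ∧ conjS s A ≤ B ∧ ⁅A, conjS t A⁆ = (⊥ : Subgroup G) ∧
      ⁅A, conjS s A⁆ = (⊥ : Subgroup G) ∧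
      ⁅conjS t A, conjS s A⁆ = (⊥ : Subgroup G) := by
    intro A hAm
    obtain ⟨h₁, hh₁, hle₁⟩ := hsemi A hAm M₁ hM₁
    have hAN : A ≤ conjS h₁⁻¹ M₁ := le_conjS_inv hle₁
    obtain ⟨t, ht, hlet⟩ := hsemi A hAm (conjS h₁⁻¹ M₂) (hinv _ _ hM₂)
    obtain ⟨s, hs, hles⟩ := hsemi A hAm (conjS h₁⁻¹ M₃) (hinv _ _ hM₃)
    have c12 : ⁅conjS h₁⁻¹ M₁, conjS h₁⁻¹ M₂⁆ = (⊥ : Subgroup G) := by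
      rw [conjS_commutator, h12, conjS_bot]
    have c13 : ⁅conjS h₁⁻¹ M₁, conjS h₁⁻¹ M₃⁆ = (⊥ : Subgroup G) := by
      rw [conjS_commutator, h13, conjS_bot]
    have c23 : ⁅conjS h₁⁻¹ M₂, conjS h₁⁻¹ M₃⁆ = (⊥ : Subgroup G) := by
      rw [conjS_commutator, h23, conjS_bot]
    refine ⟨conjS h₁⁻¹ B₂, hinv _ _ hB₂, le_trans hAN (conjS_mono _ h1B), t, ht, s, hs,
      le_trans hlet (conjS_mono _ h2B), le_trans hles (conjS_mono _ h3B), ?_, ?_, ?_⟩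
    · exact le_bot_iff.mp ((Subgroup.commutator_mono hAN hlet).trans c12.le)
    · exact le_bot_iff.mp ((Subgroup.commutator_mono hAN hles).trans c13.le)
    · exact le_bot_iff.mp ((Subgroup.commutator_mono hlet hles).trans c23.le)
  -- main witnesses
  have main : ∀ A ∈ C, ∃ B ∈ C, A ≤ B ∧
      ∀ a ∈ A, ∀ b ∈ A, ∃ x ∈ B ⊓ H, ∃ y ∈ B ⊓ H, ⁅x, y⁆ = ⁅a, b⁆ := by
    intro A hAm
    obtain ⟨B, hBm, hAB, t, ht, s, hs, htB, hsB, cAt, cAs, cts⟩ := config A hAm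
    refine ⟨B, hBm, hAB, ?_⟩
    intro a ha b hb
    set α := t * a⁻¹ * t⁻¹ with hαdef
    set γ := s * b⁻¹ * s⁻¹ with hγdef
    have hαmem : α ∈ conjS t A := by
      rw [mem_conjS]
      have e : t⁻¹ * (t * a⁻¹ * t⁻¹) * t = a⁻¹ := by group
      rw [hαdef, e]
      exact A.inv_mem ha
    have hγmem : γ ∈ conjS s A := by
      rw [mem_conjS]
      have e : s⁻¹ * (s * b⁻¹ * s⁻¹) * s = b⁻¹ := by group
      rw [hγdef, e]
      exact A.inv_mem hb
    have c1 : α * b = b * α := (comm_of_bot cAt hb hαmem).symm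
    have c2 : α * γ = γ * α := by
      have := comm_of_bot cts hαmem hγmem
      exact this
    have c3 : γ * a⁻¹ = a⁻¹ * γ := (comm_of_bot cAs (A.inv_mem ha) hγmem).symm
    have hxH : a * α ∈ H := by
      have e : a * α = (a * t * a⁻¹) * t⁻¹ := by rw [hαdef]; group
      rw [e]
      exact H.mul_mem (hN.conj_mem t ht a) (H.inv_mem ht)
    have hyH : b * γ ∈ H := by
      have e : b * γ = (b * s * b⁻¹) * s⁻¹ := by rw [hγdef]; group
      rw [e]
      exact H.mul_mem (hN.conj_mem s hs b) (H.inv_mem hs)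
    refine ⟨a * α, ⟨B.mul_mem (hAB ha) (htB hαmem), hxH⟩,
      b * γ, ⟨B.mul_mem (hAB hb) (hsB hγmem), hyH⟩, ?_⟩
    exact key_identity c1 c2 c3
  constructor
  · intro A hAm
    obtain ⟨B, hBm, hAB, hw⟩ := main A hAm
    refine ⟨B, hBm, hAB, ?_⟩
    rw [Subgroup.commutator_le]
    intro a ha b hb
    obtain ⟨x, hx, y, hy, hxy⟩ := hw a ha b hb
    rw [← hxy]
    exact Subgroup.commutator_mem_commutator hx hy
  · intro A hAm
    obtain ⟨B, hBm, hAB, hw⟩ := main A hAm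
    obtain ⟨a, ha, b, hb, hab⟩ := hcA A hAm
    obtain ⟨x, hx, y, hy, hxy⟩ := hw a ha b hb
    have hxyne : x * y ≠ y * x := by
      intro hco
      apply hab
      have h1 : ⁅x, y⁆ = 1 := commutatorElement_eq_one_iff_commute.mpr hco
      rw [hxy] at h1
      exact (commutatorElement_eq_one_iff_commute.mp h1).eq
    obtain ⟨h, hh, hBA⟩ := hsemi B hBm A hAm
    have hxA : h * x * h⁻¹ ∈ A := by
      apply hBA
      rw [mem_conjS]
      have e : h⁻¹ * (h * x * h⁻¹) * h = x := by group
      rw [e]; exact hx.1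
    have hyA : h * y * h⁻¹ ∈ A := by
      apply hBA
      rw [mem_conjS]
      have e : h⁻¹ * (h * y * h⁻¹) * h = y := by group
      rw [e]; exact hy.1
    refine ⟨h * x * h⁻¹, ⟨hxA, H.mul_mem (H.mul_mem hh hx.2) (H.inv_mem hh)⟩,
      h * y * h⁻¹, ⟨hyA, H.mul_mem (H.mul_mem hh hy.2) (H.inv_mem hh)⟩, ?_⟩
    intro hco
    apply hxyne
    have e1 : h * (x * y) * h⁻¹ = h * (y * x) * h⁻¹ := by
      calc h * (x * y) * h⁻¹ = (h * x * h⁻¹) * (h * y * h⁻¹) := by group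
        _ = (h * y * h⁻¹) * (h * x * h⁻¹) := hco
        _ = h * (y * x) * h⁻¹ := by group
    exact mul_left_cancel (mul_right_cancel e1)

end Paper
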